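/- Let $X$ be a ball quasi-Banach function space, and assume there exists $s \in (0,\infty)$ such that $X^{1/s}$ is a ball Banach function space and $M$ is bounded on $(X^{1/s})'$, so that $X \hookrightarrow L^s_w(\mathbb{R}^n)$ for the weight $w = [M(\mathbf{1}_{B(0,1)})]^\varepsilon$. Suppose $\{f_k\}$ are functions on $\mathbb{R}^{n+1}_+$ whose nontangential maximal functions satisfy $\|(f_k - f)^*\|_X \to 0$ for a function $f$ on $\mathbb{R}^{n+1}_+$, and $\epsilon_k \to 0^+$. If moreover $f$ is continuous on $\mathbb{R}^{n+1}_+$, then for every $(x,t) \in \mathbb{R}^{n+1}_+$, $\lim_{k\to\infty} f_k(x, t+\epsilon_k) = f(x,t)$. -/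

import Mathlib

open MeasureTheory Filter Metric
open scoped ENNReal NNReal

/-- The (centered) Hardy–Littlewood maximal operator on `ℝ≥0∞`-valued functions. -/
noncomputable def eMax (n : ℕ) (g : EuclideanSpace ℝ (Fin n) → ℝ≥0∞)
    (x : EuclideanSpace ℝ (Fin n)) : ℝ≥0∞ :=
  ⨆ (r : ℝ) (_ : 0 < r), (volume (Metric.ball x r))⁻¹ * ∫⁻ y in Metric.ball x r, g y

/-- The nontangential maximal function `g^*(y) = sup_{|z-y|<s} |g(z,s)|`. -/
noncomputable def ntMax (n : ℕ) (g : EuclideanSpace ℝ (Fin n) × ℝ → ℝ)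
    (y : EuclideanSpace ℝ (Fin n)) : ℝ≥0∞ :=
  ⨆ (p : EuclideanSpace ℝ (Fin n) × ℝ) (_ : 0 < p.2 ∧ dist p.1 y < p.2),
    ENNReal.ofReal |g p|

/-- **Pointwise convergence from nontangential-maximal convergence.** Let `N` be the
quasi-norm of a ball quasi-Banach function space `X` which embeds continuously into
`L^s_w(ℝⁿ)` for the weight `w = (M 1_{B(0,1)})^ε`, `ε ∈ (0,1)` (as follows from `X^{1/s}`
being a ball Banach function space with `M` bounded on its associate space). If
`f_k, f` are functions on `ℝ^{n+1}_+` with `‖(f_k - f)^*‖_X → 0`, `f` is continuous on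
`ℝ^{n+1}_+`, and `ε_k → 0⁺`, then `f_k(x, t + ε_k) → f(x,t)` for every
`(x,t) ∈ ℝ^{n+1}_+`. -/
theorem stmt_16 (n : ℕ) (N : (EuclideanSpace ℝ (Fin n) → ℝ≥0∞) → ℝ≥0∞)
    (hmono : ∀ f g, (∀ x, f x ≤ g x) → N f ≤ N g)
    (s : ℝ) (hs : 0 < s) (ε : ℝ) (hε : ε ∈ Set.Ioo (0 : ℝ) 1)
    (C₀ : ℝ) (hC₀ : 0 < C₀)
    (hemb : ∀ g : EuclideanSpace ℝ (Fin n) → ℝ≥0∞,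
      (∫⁻ x, g x ^ s
          * (eMax n ((Metric.ball (0 : EuclideanSpace ℝ (Fin n)) 1).indicator
              fun _ => (1 : ℝ≥0∞)) x) ^ ε) ^ (1 / s)
        ≤ ENNReal.ofReal C₀ * N g)
    (fk : ℕ → EuclideanSpace ℝ (Fin n) × ℝ → ℝ)
    (f : EuclideanSpace ℝ (Fin n) × ℝ → ℝ)
    (hf : ContinuousOn f {p : EuclideanSpace ℝ (Fin n) × ℝ | 0 < p.2})
    (hconv : Tendsto (fun k => N (ntMax n fun p => fk k p - f p)) atTop (nhds 0))
    (ϵ : ℕ → ℝ) (hϵpos : ∀ k, 0 < ϵ k) (hϵ : Tendsto ϵ atTop (nhds 0)) :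
    ∀ (x : EuclideanSpace ℝ (Fin n)) (t : ℝ), 0 < t →
      Tendsto (fun k => fk k (x, t + ϵ k)) atTop (nhds (f (x, t))) := by
  intro x t ht
  have hε0 := hε.1
  set ind : EuclideanSpace ℝ (Fin n) → ℝ≥0∞ := (Metric.ball (0 : EuclideanSpace ℝ (Fin n)) 1).indicator fun _ => (1 : ℝ≥0∞) with hind
  set w : EuclideanSpace ℝ (Fin n) → ℝ≥0∞ := fun y => (eMax n ind y) ^ ε with hw
  -- uniform lower bound for the weight on `ball x t`
  set r : ℝ := ‖x‖ + t + 2 with hr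
  have hrpos : 0 < r := by positivity
  set c₀ : ℝ≥0∞ := (volume (Metric.ball (0 : EuclideanSpace ℝ (Fin n)) r))⁻¹ * volume (Metric.ball (0 : EuclideanSpace ℝ (Fin n)) 1) with hc₀
  have hball1pos : 0 < volume (Metric.ball (0 : EuclideanSpace ℝ (Fin n)) 1) :=
    measure_ball_pos volume 0 one_pos
  have hballrfin : volume (Metric.ball (0 : EuclideanSpace ℝ (Fin n)) r) < ∞ := measure_ball_lt_top
  have hballrpos : 0 < volume (Metric.ball (0 : EuclideanSpace ℝ (Fin n)) r) := measure_ball_pos volume 0 hrpos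
  have hc₀pos : 0 < c₀ := by
    apply ENNReal.mul_pos _ hball1pos.ne'
    simp [ENNReal.inv_ne_zero, hballrfin.ne]
  have hc₀fin : c₀ < ∞ :=
    ENNReal.mul_lt_top (ENNReal.inv_lt_top.2 hballrpos) measure_ball_lt_top
  have hwlow : ∀ y ∈ Metric.ball x t, c₀ ^ ε ≤ w y := by
    intro y hy
    apply ENNReal.rpow_le_rpow _ hε0.le
    have hsub : Metric.ball (0 : EuclideanSpace ℝ (Fin n)) 1 ⊆ Metric.ball y r := by
      intro z hz
      simp only [Metric.mem_ball] at hz hy ⊢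
      have h1 : dist z y ≤ dist z 0 + dist 0 x + dist x y := dist_triangle4 z 0 x y
      have h2 : dist 0 x = ‖x‖ := by simp
      have h3 : dist x y = dist y x := dist_comm x y
      nlinarith [dist_nonneg (x := z) (y := 0)]
    have hint : ∫⁻ z in Metric.ball y r, ind z = volume (Metric.ball (0 : EuclideanSpace ℝ (Fin n)) 1) := by
      rw [hind, lintegral_indicator measurableSet_ball]
      simp [Measure.restrict_apply, measurableSet_ball,
        Set.inter_eq_self_of_subset_left hsub]
    have hvol : volume (Metric.ball y r) = volume (Metric.ball (0 : EuclideanSpace ℝ (Fin n)) r) :=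
      Measure.addHaar_ball_center volume y r
    have : c₀ ≤ (volume (Metric.ball y r))⁻¹ * ∫⁻ z in Metric.ball y r, ind z := by
      rw [hint, hvol]
    refine this.trans ?_
    exact le_iSup₂ (f := fun (ρ : ℝ) (_ : 0 < ρ) =>
      (volume (Metric.ball y ρ))⁻¹ * ∫⁻ z in Metric.ball y ρ, ind z) r hrpos
  -- the constant D
  set D : ℝ≥0∞ := c₀ ^ ε * volume (Metric.ball x t) with hD
  have hDpos : 0 < D := by
    apply ENNReal.mul_pos _ (measure_ball_pos volume x ht).ne'
    exact (ENNReal.rpow_pos hc₀pos hc₀fin.ne).ne'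
  have hDfin : D < ∞ :=
    ENNReal.mul_lt_top (ENNReal.rpow_lt_top_of_nonneg hε0.le hc₀fin.ne)
      measure_ball_lt_top
  -- the key estimate
  set g : ℕ → EuclideanSpace ℝ (Fin n) → ℝ≥0∞ := fun k => ntMax n fun p => fk k p - f p with hg
  set A : ℕ → ℝ≥0∞ := fun k => ENNReal.ofReal |fk k (x, t + ϵ k) - f (x, t + ϵ k)| with hA
  have hptwise : ∀ k, ∀ y ∈ Metric.ball x t, A k ≤ g k y := by
    intro k y hy
    have hcond : 0 < ((x, t + ϵ k) : EuclideanSpace ℝ (Fin n) × ℝ).2 ∧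
        dist ((x, t + ϵ k) : EuclideanSpace ℝ (Fin n) × ℝ).1 y < ((x, t + ϵ k) : EuclideanSpace ℝ (Fin n) × ℝ).2 := by
      constructor
      · exact add_pos ht (hϵpos k)
      · simp only [Metric.mem_ball] at hy
        calc dist x y = dist y x := dist_comm x y
        _ < t := hy
        _ < t + ϵ k := lt_add_of_pos_right t (hϵpos k)
    exact le_iSup₂ (f := fun (p : EuclideanSpace ℝ (Fin n) × ℝ) (_ : 0 < p.2 ∧ dist p.1 y < p.2) =>
      ENNReal.ofReal |fk k p - f p|) (x, t + ϵ k) hcond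
  have hkey : ∀ k, A k ^ s * D ≤ (ENNReal.ofReal C₀ * N (g k)) ^ s := by
    intro k
    have h1 : A k ^ s * D
        = ∫⁻ z, (Metric.ball x t).indicator (fun _ => A k ^ s * c₀ ^ ε) z := by
      rw [lintegral_indicator_const measurableSet_ball, hD]
      ring
    have h2 : ∫⁻ z, (Metric.ball x t).indicator (fun _ => A k ^ s * c₀ ^ ε) z
        ≤ ∫⁻ z, g k z ^ s * w z := by
      apply lintegral_mono
      intro z
      by_cases hz : z ∈ Metric.ball x t
      · rw [Set.indicator_of_mem hz]
        exact mul_le_mul' (ENNReal.rpow_le_rpow (hptwise k z hz) hs.le) (hwlow z hz)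
      · rw [Set.indicator_of_notMem hz]; exact zero_le
    have h3 : ∫⁻ z, g k z ^ s * w z ≤ (ENNReal.ofReal C₀ * N (g k)) ^ s := by
      have := hemb (g k)
      calc ∫⁻ z, g k z ^ s * w z
          = ((∫⁻ z, g k z ^ s * w z) ^ (1 / s)) ^ s := by
            rw [← ENNReal.rpow_mul, one_div, inv_mul_cancel₀ hs.ne', ENNReal.rpow_one]
        _ ≤ (ENNReal.ofReal C₀ * N (g k)) ^ s := ENNReal.rpow_le_rpow this hs.le
    exact h1.le.trans (h2.trans h3)
  -- pass to the limit
  have hRtend : Tendsto (fun k => (ENNReal.ofReal C₀ * N (g k)) ^ s / D) atTop (nhds 0) := by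
    have h1 : Tendsto (fun k => ENNReal.ofReal C₀ * N (g k)) atTop (nhds 0) := by
      have := ENNReal.Tendsto.const_mul (a := ENNReal.ofReal C₀) hconv
        (Or.inr ENNReal.ofReal_ne_top)
      simpa using this
    have h2 : Tendsto (fun k => (ENNReal.ofReal C₀ * N (g k)) ^ s) atTop (nhds 0) := by
      have := (ENNReal.continuous_rpow_const (y := s)).tendsto 0
      have h3 := this.comp h1
      simpa [Function.comp_def, ENNReal.zero_rpow_of_pos hs] using h3
    have := ENNReal.Tendsto.div_const h2 (Or.inr hDpos.ne')
    simpa [ENNReal.zero_div] using this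
  have hAs : Tendsto (fun k => A k ^ s) atTop (nhds 0) := by
    apply tendsto_of_tendsto_of_tendsto_of_le_of_le tendsto_const_nhds hRtend
      (fun k => zero_le)
    intro k
    rw [ENNReal.le_div_iff_mul_le (Or.inl hDpos.ne') (Or.inl hDfin.ne)]
    exact hkey k
  have hAtend : Tendsto A atTop (nhds 0) := by
    have h1 := (ENNReal.continuous_rpow_const (y := 1 / s)).tendsto 0
    have h2 := h1.comp hAs
    have h3 : ∀ k, (A k ^ s) ^ (1 / s) = A k := by
      intro k
      rw [← ENNReal.rpow_mul, one_div, mul_inv_cancel₀ hs.ne', ENNReal.rpow_one]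
    simp only [Function.comp_def, h3] at h2
    simpa [one_div, ENNReal.zero_rpow_of_pos (by positivity : (0:ℝ) < s⁻¹)] using h2
  have hdiff : Tendsto (fun k => fk k (x, t + ϵ k) - f (x, t + ϵ k)) atTop (nhds 0) := by
    have htoReal : Tendsto (fun k => (A k).toReal) atTop (nhds 0) := by
      have := (ENNReal.tendsto_toReal (a := 0) (by simp)).comp hAtend
      simpa [Function.comp_def] using this
    have habs : Tendsto (fun k => |fk k (x, t + ϵ k) - f (x, t + ϵ k)|) atTop (nhds 0) := by
      have : ∀ k, (A k).toReal = |fk k (x, t + ϵ k) - f (x, t + ϵ k)| := fun k =>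
        ENNReal.toReal_ofReal (abs_nonneg _)
      simpa [this] using htoReal
    apply tendsto_of_tendsto_of_tendsto_of_le_of_le (by simpa using habs.neg) habs
      (fun k => neg_abs_le _) (fun k => le_abs_self _)
  have hcont : ContinuousAt f (x, t) := by
    have hopen : IsOpen {p : EuclideanSpace ℝ (Fin n) × ℝ | 0 < p.2} := isOpen_lt continuous_const continuous_snd
    exact hf.continuousAt (hopen.mem_nhds (show (0:ℝ) < ((x, t) : EuclideanSpace ℝ (Fin n) × ℝ).2 from ht))
  have hseq : Tendsto (fun k => ((x, t + ϵ k) : EuclideanSpace ℝ (Fin n) × ℝ)) atTop (nhds (x, t)) := by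
    apply Tendsto.prodMk_nhds tendsto_const_nhds
    simpa using tendsto_const_nhds.add hϵ
  have hfcont : Tendsto (fun k => f (x, t + ϵ k)) atTop (nhds (f (x, t))) :=
    hcont.tendsto.comp hseq
  have := hdiff.add hfcont
  simpa using this
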